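/- Every edge of the Farey graph lies in exactly two triangles: for every pair of adjacent vertices u, v of F, there are exactly two vertices w of F that are adjacent to both u and v. -/

import Mathlib

/-- Adjacency in the Farey graph on `ℚ ∪ {∞}`, where `∞` (the vertex `none`) is
regarded as `1/0`: two reduced fractions `p/q` and `r/s` are adjacent iff `|ps - rq| = 1`. -/
def fareyAdj : Option ℚ → Option ℚ → Prop
  | some p, some q => |p.num * (q.den : ℤ) - q.num * (p.den : ℤ)| = 1
  | some p, none => p.den = 1
  | none, some q => q.den = 1
  | none, none => False

/-- The Farey graph: vertices are `ℚ ∪ {∞}` (modelled as `Option ℚ`, with `none = ∞ = 1/0`),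
and `p/q`, `r/s` (in lowest terms) are adjacent iff `|ps - rq| = 1`. -/
def fareyGraph : SimpleGraph (Option ℚ) where
  Adj x y := fareyAdj x y
  symm := by
    constructor
    rintro (_ | p) (_ | q) h <;> simp_all [fareyAdj, abs_sub_comm]
  loopless := by
    constructor
    rintro (_ | p) h
    · exact h
    · simp [fareyAdj] at h

def nmV : Option ℚ → ℤ
  | some p => p.num
  | none => 1

def dnV : Option ℚ → ℤ
  | some p => (p.den : ℤ)
  | none => 0

lemma adj_iff (x y : Option ℚ) : fareyAdj x y ↔ |nmV x * dnV y - nmV y * dnV x| = 1 := by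
  rcases x with _ | p <;> rcases y with _ | q <;> simp [fareyAdj, nmV, dnV]

def mkV (x y : ℤ) : Option ℚ := if y = 0 then none else some (Rat.divInt x y)

lemma mkV_self (w : Option ℚ) : mkV (nmV w) (dnV w) = w := by
  rcases w with _ | p
  · rfl
  · simp [mkV, nmV, dnV, p.den_nz, Rat.num_divInt_den]

lemma mkV_neg (x y : ℤ) : mkV (-x) (-y) = mkV x y := by
  simp only [mkV, neg_eq_zero, Rat.neg_divInt_neg]

lemma mkV_spec_pos (x y : ℤ) (h : x.natAbs.Coprime y.natAbs) (hy : 0 < y) :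
    nmV (mkV x y) = x ∧ dnV (mkV x y) = y := by
  have hd : (y.toNat : ℤ) = y := Int.toNat_of_nonneg (by omega)
  have hab : y.natAbs = y.toNat := by omega
  have : mkV x y = some (Rat.mk' x y.toNat (by omega) (hab ▸ h)) := by
    rw [mkV, if_neg (by omega), Rat.mk_eq_divInt, hd]
  rw [this]
  exact ⟨rfl, by simp [dnV, hd]⟩

lemma mkV_spec (x y : ℤ) (h : x.natAbs.Coprime y.natAbs) :
    ∃ s : ℤ, (s = 1 ∨ s = -1) ∧ nmV (mkV x y) = s * x ∧ dnV (mkV x y) = s * y := by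
  rcases lt_trichotomy y 0 with hy | hy | hy
  · have hc : (-x).natAbs.Coprime (-y).natAbs := by simpa using h
    have := mkV_spec_pos (-x) (-y) hc (by omega)
    rw [mkV_neg] at this
    exact ⟨-1, Or.inr rfl, by omega, by omega⟩
  · subst hy
    have h1 : x.natAbs = 1 := by simpa using h
    have hx : x = 1 ∨ x = -1 := by omega
    refine ⟨x, hx, ?_, by simp [mkV, dnV]⟩
    have : x * x = 1 := by rcases hx with h | h <;> simp [h]
    simpa [mkV, nmV] using this.symm
  · obtain ⟨h1, h2⟩ := mkV_spec_pos x y h hy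
    exact ⟨1, Or.inl rfl, by omega, by omega⟩

lemma key (a b c d x y ε δ γ : ℤ) (h3 : a*d - c*b = ε) (h1 : a*y - x*b = δ)
    (h2 : c*y - x*d = γ) : ε*x = δ*c - γ*a ∧ ε*y = δ*d - γ*b :=
  ⟨by linear_combination c*h1 - a*h2 - x*h3, by linear_combination d*h1 - b*h2 - y*h3⟩

/-- **Every edge of the Farey graph lies in exactly two triangles:** any two adjacent
vertices `u, v` have exactly two common neighbours. -/
theorem fareyGraph_edge_two_triangles (u v : Option ℚ) (huv : fareyGraph.Adj u v) :
    ∃ w₁ w₂ : Option ℚ, w₁ ≠ w₂ ∧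
      ∀ w : Option ℚ, (fareyGraph.Adj u w ∧ fareyGraph.Adj v w) ↔ (w = w₁ ∨ w = w₂) := by
  have habs : |nmV u * dnV v - nmV v * dnV u| = 1 := (adj_iff u v).mp huv
  set a := nmV u with ha
  set b := dnV u with hb
  set c := nmV v with hc
  set d := dnV v with hd
  obtain ⟨ε, hε, hdet⟩ : ∃ ε : ℤ, (ε = 1 ∨ ε = -1) ∧ a * d - c * b = ε :=
    ⟨a * d - c * b, (abs_eq (by norm_num)).mp habs, rfl⟩
  have cop1 : (a + c).natAbs.Coprime (b + d).natAbs := by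
    have : IsCoprime (a + c) (b + d) :=
      ⟨ε * d, -(ε * c), by rcases hε with h | h <;> subst h <;>
        [linear_combination hdet; linear_combination -hdet]⟩
    exact Int.isCoprime_iff_gcd_eq_one.mp this
  have cop2 : (a - c).natAbs.Coprime (b - d).natAbs := by
    have : IsCoprime (a - c) (b - d) :=
      ⟨ε * d, -(ε * c), by rcases hε with h | h <;> subst h <;>
        [linear_combination hdet; linear_combination -hdet]⟩
    exact Int.isCoprime_iff_gcd_eq_one.mp this
  obtain ⟨s₁, hs₁, hn₁, hd₁⟩ := mkV_spec _ _ cop1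
  obtain ⟨s₂, hs₂, hn₂, hd₂⟩ := mkV_spec _ _ cop2
  refine ⟨mkV (a + c) (b + d), mkV (a - c) (b - d), ?_, ?_⟩
  · intro hEq
    have e1 : s₁ * (a + c) = s₂ * (a - c) := by rw [← hn₁, ← hn₂, hEq]
    have e2 : s₁ * (b + d) = s₂ * (b - d) := by rw [← hd₁, ← hd₂, hEq]
    rcases hs₁ with h1 | h1 <;> rcases hs₂ with h2 | h2 <;> subst h1 h2
    · obtain ⟨z1, z2⟩ : c = 0 ∧ d = 0 := by omega
      rw [z1, z2] at hdet; simp at hdet; omega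
    · obtain ⟨z1, z2⟩ : a = 0 ∧ b = 0 := by omega
      rw [z1, z2] at hdet; simp at hdet; omega
    · obtain ⟨z1, z2⟩ : a = 0 ∧ b = 0 := by omega
      rw [z1, z2] at hdet; simp at hdet; omega
    · obtain ⟨z1, z2⟩ : c = 0 ∧ d = 0 := by omega
      rw [z1, z2] at hdet; simp at hdet; omega
  · intro w
    constructor
    · rintro ⟨h1, h2⟩
      obtain ⟨δ, hδ, e1⟩ : ∃ δ : ℤ, (δ = 1 ∨ δ = -1) ∧ a * dnV w - nmV w * b = δ :=
        ⟨_, (abs_eq (by norm_num)).mp ((adj_iff u w).mp h1), rfl⟩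
      obtain ⟨γ, hγ, e2⟩ : ∃ γ : ℤ, (γ = 1 ∨ γ = -1) ∧ c * dnV w - nmV w * d = γ :=
        ⟨_, (abs_eq (by norm_num)).mp ((adj_iff v w).mp h2), rfl⟩
      obtain ⟨kx, ky⟩ := key a b c d (nmV w) (dnV w) ε δ γ hdet e1 e2
      rcases hδ with h | h <;> rcases hγ with h' | h' <;> rcases hε with h'' | h'' <;>
          subst h h' h'' <;>
        first
          | (left; rw [← mkV_self w, show nmV w = a + c by omega,
              show dnV w = b + d by omega])
          | (left; rw [← mkV_self w, show nmV w = -(a + c) by omega,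
              show dnV w = -(b + d) by omega, mkV_neg])
          | (right; rw [← mkV_self w, show nmV w = a - c by omega,
              show dnV w = b - d by omega])
          | (right; rw [← mkV_self w, show nmV w = -(a - c) by omega,
              show dnV w = -(b - d) by omega, mkV_neg])
    · rintro (rfl | rfl)
      · constructor
        · refine (adj_iff u _).mpr ?_
          have : a * dnV (mkV (a + c) (b + d)) - nmV (mkV (a + c) (b + d)) * b = s₁ * ε := by
            rw [hn₁, hd₁]; linear_combination s₁ * hdet
          rw [← ha, this]
          rcases hs₁ with h | h <;> rcases hε with h' | h' <;> simp [h, h']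
        · refine (adj_iff v _).mpr ?_
          have : c * dnV (mkV (a + c) (b + d)) - nmV (mkV (a + c) (b + d)) * d = -(s₁ * ε) := by
            rw [hn₁, hd₁]; linear_combination (-s₁) * hdet
          rw [← hc, this]
          rcases hs₁ with h | h <;> rcases hε with h' | h' <;> simp [h, h']
      · constructor
        · refine (adj_iff u _).mpr ?_
          have : a * dnV (mkV (a - c) (b - d)) - nmV (mkV (a - c) (b - d)) * b = -(s₂ * ε) := by
            rw [hn₂, hd₂]; linear_combination (-s₂) * hdet
          rw [← ha, this]
          rcases hs₂ with h | h <;> rcases hε with h' | h' <;> simp [h, h']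
        · refine (adj_iff v _).mpr ?_
          have : c * dnV (mkV (a - c) (b - d)) - nmV (mkV (a - c) (b - d)) * d = -(s₂ * ε) := by
            rw [hn₂, hd₂]; linear_combination (-s₂) * hdet
          rw [← hc, this]
          rcases hs₂ with h | h <;> rcases hε with h' | h' <;> simp [h, h']
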